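/- Let G be a connected graph of order at least 2 and let H be a graph. Then sdim_f(G[H]) ≥ m_1(G)·sl_f(H) + (m_2(G)/2)·sdim_f(K_2[H]) + (m_3(G)/2)·|V(H)|, where m_1(G), m_2(G), m_3(G) are the total numbers of vertices in equivalence classes of the twin relation ≡ of types 1, 2, 3 respectively. -/

import Mathlib

open SimpleGraph

/-- `Sset G x y` is the set `S{x,y}` of vertices `z` such that `x` lies on some shortest
`y`–`z` path or `y` lies on some shortest `x`–`z` path in `G`. -/
def Sset {V : Type*} (G : SimpleGraph V) (x y : V) : Set V :=
  {z | (∃ p : G.Walk y z, p.length = G.dist y z ∧ x ∈ p.support) ∨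
       (∃ p : G.Walk x z, p.length = G.dist x z ∧ y ∈ p.support)}

/-- A strong resolving function of `G`: `g : V → [0,1]` with `g(S{x,y}) ≥ 1` for all
distinct vertices `x, y`. -/
def IsSRF {V : Type*} (G : SimpleGraph V) (g : V → ℝ) : Prop :=
  (∀ v, 0 ≤ g v ∧ g v ≤ 1) ∧ ∀ x y : V, x ≠ y → 1 ≤ ∑ᶠ z ∈ Sset G x y, g z

/-- The fractional strong metric dimension of `G`. -/
noncomputable def sdimf {V : Type*} (G : SimpleGraph V) : ℝ :=
  sInf {s : ℝ | ∃ g : V → ℝ, IsSRF G g ∧ s = ∑ᶠ v, g v}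

/-- A strong resolving set of `G`: every pair of distinct vertices is strongly resolved
by some vertex of `S` (i.e. some vertex of `S` lies in `S{x,y}`). -/
def IsSRSet {V : Type*} (G : SimpleGraph V) (S : Set V) : Prop :=
  ∀ x y : V, x ≠ y → ∃ z ∈ S, z ∈ Sset G x y

/-- The strong metric dimension of `G`: the minimum cardinality of a strong resolving set. -/
noncomputable def sdim {V : Type*} (G : SimpleGraph V) : ℕ :=
  sInf {n : ℕ | ∃ S : Set V, IsSRSet G S ∧ S.ncard = n}

/-- `u` is maximally distant from `v`: `d(u,v) ≥ d(w,v)` for every neighbor `w` of `u`. -/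
def MaxDistFrom {V : Type*} (G : SimpleGraph V) (u v : V) : Prop :=
  ∀ w : V, G.Adj u w → G.dist w v ≤ G.dist u v

/-- `u` and `v` are mutually maximally distant (MMD) in `G`. -/
def MMD {V : Type*} (G : SimpleGraph V) (u v : V) : Prop :=
  u ≠ v ∧ MaxDistFrom G u v ∧ MaxDistFrom G v u

/-- The strong resolving graph of `G` (on the ambient vertex set): `u ~ v` iff `u` MMD `v`. -/
def SRGraph {V : Type*} (G : SimpleGraph V) : SimpleGraph V where
  Adj := MMD G
  symm := ⟨fun _ _ h => ⟨h.1.symm, h.2.2, h.2.1⟩⟩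
  loopless := ⟨fun _ h => h.1 rfl⟩

/-- `M(G)`: the set of vertices that are mutually maximally distant with some vertex. -/
def Mset {V : Type*} (G : SimpleGraph V) : Set V := {x | ∃ y, MMD G x y}

/-- The matching number of `G`. -/
noncomputable def matchNum {V : Type*} (G : SimpleGraph V) : ℕ :=
  sSup {n : ℕ | ∃ M : G.Subgraph, M.IsMatching ∧ M.edgeSet.ncard = n}

/-- The corona product `G ⊙ H`. -/
def corona {V W : Type*} (G : SimpleGraph V) (H : SimpleGraph W) :
    SimpleGraph (V ⊕ V × W) where
  Adj x y :=
    match x, y with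
    | Sum.inl u, Sum.inl u' => G.Adj u u'
    | Sum.inl u, Sum.inr iw => u = iw.1
    | Sum.inr iw, Sum.inl u => iw.1 = u
    | Sum.inr iw, Sum.inr iw' => iw.1 = iw'.1 ∧ H.Adj iw.2 iw'.2
  symm := by
    constructor
    rintro (u | iw) (u' | iw') h
    · exact G.symm.symm _ _ h
    · exact h.symm
    · exact h.symm
    · exact ⟨h.1.symm, H.symm.symm _ _ h.2⟩
  loopless := by
    constructor
    rintro (u | iw) h
    · exact G.loopless.irrefl u h
    · exact H.loopless.irrefl iw.2 h.2

/-- `K₁ ⊙ H`: the graph obtained from `H` by adding one new vertex adjacent to every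
vertex of `H`. -/
def cone {W : Type*} (H : SimpleGraph W) : SimpleGraph (Option W) where
  Adj x y :=
    match x, y with
    | none, none => False
    | none, some _ => True
    | some _, none => True
    | some w, some w' => H.Adj w w'
  symm := by
    constructor
    rintro (_ | w) (_ | w') h
    · exact h
    · exact trivial
    · exact trivial
    · exact H.symm.symm _ _ h
  loopless := by
    constructor
    rintro (_ | w) h
    · exact h
    · exact H.loopless.irrefl w h

/-- The lexicographic product `G[H]`. -/
def lexProd {V W : Type*} (G : SimpleGraph V) (H : SimpleGraph W) :
    SimpleGraph (V × W) where
  Adj x y := G.Adj x.1 y.1 ∨ (x.1 = y.1 ∧ H.Adj x.2 y.2)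
  symm := by
    constructor
    rintro x y (h | ⟨h1, h2⟩)
    · exact Or.inl (G.symm.symm _ _ h)
    · exact Or.inr ⟨h1.symm, H.symm.symm _ _ h2⟩
  loopless := by
    constructor
    rintro x (h | ⟨_, h2⟩)
    · exact G.loopless.irrefl x.1 h
    · exact H.loopless.irrefl x.2 h2

/-- `SL{x,y} = (N[x] ∪ N[y]) ∩ S{x,y}`. -/
def SLset {W : Type*} (H : SimpleGraph W) (x y : W) : Set W :=
  (insert x (H.neighborSet x) ∪ insert y (H.neighborSet y)) ∩ Sset H x y

/-- A strong locating function of `H`. -/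
def IsSLF {W : Type*} (H : SimpleGraph W) (f : W → ℝ) : Prop :=
  (∀ v, 0 ≤ f v ∧ f v ≤ 1) ∧ ∀ x y : W, x ≠ y → 1 ≤ ∑ᶠ z ∈ SLset H x y, f z

/-- `sl_f(H)`: the minimum weight of a strong locating function of `H`. -/
noncomputable def slf {W : Type*} (H : SimpleGraph W) : ℝ :=
  sInf {s : ℝ | ∃ f : W → ℝ, IsSLF H f ∧ s = ∑ᶠ v, f v}

/-- `u` has a true twin: some other vertex with the same closed neighborhood. -/
def HasTrueTwin {V : Type*} (G : SimpleGraph V) (u : V) : Prop :=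
  ∃ v : V, v ≠ u ∧ insert v (G.neighborSet v) = insert u (G.neighborSet u)

/-- `u` has a false twin: some other vertex with the same open neighborhood. -/
def HasFalseTwin {V : Type*} (G : SimpleGraph V) (u : V) : Prop :=
  ∃ v : V, v ≠ u ∧ G.neighborSet v = G.neighborSet u

/-- `m₁(G)`: number of vertices in type-1 (singleton) classes of the twin relation. -/
noncomputable def m1 {V : Type*} (G : SimpleGraph V) : ℕ :=
  {u : V | ¬ HasTrueTwin G u ∧ ¬ HasFalseTwin G u}.ncard

/-- `m₂(G)`: number of vertices in type-2 (clique) classes of the twin relation. -/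
noncomputable def m2 {V : Type*} (G : SimpleGraph V) : ℕ :=
  {u : V | HasTrueTwin G u}.ncard

/-- `m₃(G)`: number of vertices in type-3 (independent set) classes of the twin relation. -/
noncomputable def m3 {V : Type*} (G : SimpleGraph V) : ℕ :=
  {u : V | HasFalseTwin G u}.ncard

/-- The strong resolving graph of `G` (whose vertex set is `M(G)`) is Hamiltonian:
there is a cycle in `SRGraph G` passing through every vertex of `M(G)`. -/
def SRHamiltonian {V : Type*} (G : SimpleGraph V) : Prop :=
  ∃ (u : V) (p : (SRGraph G).Walk u u), p.IsCycle ∧ ∀ v ∈ Mset G, v ∈ p.support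



section WalkLemmas

variable {α : Type*} {Γ : SimpleGraph α} {x z a : α}

lemma walk_len0 (p : Γ.Walk x z) (h : p.length = 0) : p.support = [x] ∧ x = z := by
  cases p with
  | nil => simp
  | cons h' q => simp at h

lemma walk_len1 (p : Γ.Walk x z) (h : p.length = 1) :
    p.support = [x, z] ∧ Γ.Adj x z := by
  cases p with
  | nil => simp at h
  | cons h' q =>
    cases q with
    | nil => simpa using h'
    | cons h'' r => simp at h

lemma walk_len2 (p : Γ.Walk x z) (h : p.length = 2) :
    ∃ m, p.support = [x, m, z] ∧ Γ.Adj x m ∧ Γ.Adj m z := by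
  cases p with
  | nil => simp at h
  | cons h' q =>
    cases q with
    | nil => simp at h
    | cons h'' r =>
      cases r with
      | nil => exact ⟨_, by simp, h', h''⟩
      | cons h''' s => simp at h

lemma cut_lemma [DecidableEq α] (p : Γ.Walk x z) (ha : a ∈ p.support) :
    Γ.dist x a + Γ.dist a z ≤ p.length := by
  have hspec := p.take_spec ha
  have := congrArg Walk.length hspec
  rw [Walk.length_append] at this
  calc Γ.dist x a + Γ.dist a z ≤ (p.takeUntil a ha).length + (p.dropUntil a ha).length :=
        add_le_add (dist_le _) (dist_le _)
    _ = p.length := this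

lemma dist_eq_two_of (hne : x ≠ z) (hnadj : ¬ Γ.Adj x z) (p : Γ.Walk x z)
    (hp : p.length = 2) : Γ.dist x z = 2 := by
  have h1 : Γ.dist x z ≤ 2 := hp ▸ dist_le p
  have h0 : Γ.dist x z ≠ 0 := by
    rw [dist_ne_zero_iff_ne_and_reachable]
    exact ⟨hne, ⟨p⟩⟩
  have h2 : Γ.dist x z ≠ 1 := fun h => hnadj (dist_eq_one_iff_adj.mp h)
  omega

lemma not_adj_of_dist_eq_two (h : Γ.dist x z = 2) : ¬ Γ.Adj x z := by
  intro hadj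
  rw [dist_eq_one_iff_adj.mpr hadj] at h
  omega

lemma ne_of_dist_eq_two (h : Γ.dist x z = 2) : x ≠ z := by
  rintro rfl; rw [dist_self] at h; omega

end WalkLemmas

section Lex

variable {V W : Type*} {G : SimpleGraph V} {H : SimpleGraph W}

lemma lex_adj {x y : V × W} :
    (lexProd G H).Adj x y ↔ G.Adj x.1 y.1 ∨ (x.1 = y.1 ∧ H.Adj x.2 y.2) := Iff.rfl

/-- lift a `G`-walk to a constant-second-coordinate walk in `G[H]`. -/
def liftConst (d : W) : ∀ {a c : V}, G.Walk a c → (lexProd G H).Walk (a, d) (c, d)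
  | _, _, SimpleGraph.Walk.nil => SimpleGraph.Walk.nil
  | _, _, SimpleGraph.Walk.cons h p => SimpleGraph.Walk.cons (Or.inl h) (liftConst d p)

lemma liftConst_length (d : W) {a c : V} (p : G.Walk a c) :
    (liftConst (H := H) d p).length = p.length := by
  induction p with
  | nil => rfl
  | cons h p ih => exact congrArg (· + 1) ih

lemma proj_dist_le (hG : G.Connected) {x z : V × W} (p : (lexProd G H).Walk x z) :
    G.dist x.1 z.1 ≤ p.length := by
  induction p with
  | nil => simp
  | @cons x m z h q ih =>
    rcases h with h | ⟨he, _⟩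
    · calc G.dist x.1 z.1 ≤ G.dist x.1 m.1 + G.dist m.1 z.1 := hG.dist_triangle
        _ ≤ 1 + q.length := by
            have : G.dist x.1 m.1 ≤ 1 := dist_le (SimpleGraph.Walk.cons h SimpleGraph.Walk.nil)
            omega
        _ = (SimpleGraph.Walk.cons (Or.inl h) q).length := by show 1 + q.length = q.length + 1; omega
    · have hgeq : G.dist x.1 z.1 = G.dist m.1 z.1 := by rw [he]
      show G.dist x.1 z.1 ≤ q.length + 1
      omega

lemma lex_exists_walk (hG : G.Connected) {a c : V} (hac : a ≠ c) (b d : W) :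
    ∃ q : (lexProd G H).Walk (a, b) (c, d), q.length = G.dist a c := by
  obtain ⟨p, hp⟩ := hG.exists_walk_length_eq_dist a c
  cases p with
  | nil => exact absurd rfl hac
  | @cons _ m _ h q =>
    refine ⟨SimpleGraph.Walk.cons (Or.inl h : (lexProd G H).Adj (a, b) (m, d)) (liftConst d q),
      ?_⟩
    show (liftConst d q).length + 1 = G.dist a c
    rw [liftConst_length]
    simpa using hp

lemma lex_dist_eq (hG : G.Connected) {a c : V} (hac : a ≠ c) (b d : W) :
    (lexProd G H).dist (a, b) (c, d) = G.dist a c := by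
  obtain ⟨q, hq⟩ := lex_exists_walk (H := H) hG hac b d
  refine le_antisymm (hq ▸ dist_le q) ?_
  obtain ⟨p, hp⟩ := (Reachable.exists_walk_length_eq_dist ⟨q⟩ :
    ∃ p : (lexProd G H).Walk (a, b) (c, d), p.length = (lexProd G H).dist (a, b) (c, d))
  exact hp ▸ proj_dist_le hG p

lemma exists_adj (hG : G.Connected) [Fintype V] (hn : 2 ≤ Fintype.card V) (u : V) :
    ∃ n, G.Adj u n := by
  obtain ⟨v, hv⟩ := Fintype.exists_ne_of_one_lt_card (by omega) u
  obtain ⟨p⟩ := hG.preconnected u v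
  cases p with
  | nil => exact absurd rfl hv.symm
  | cons h q => exact ⟨_, h⟩

lemma lex_reachable (hG : G.Connected) [Fintype V] (hn : 2 ≤ Fintype.card V) (x z : V × W) :
    (lexProd G H).Reachable x z := by
  obtain ⟨a, b⟩ := x
  obtain ⟨c, d⟩ := z
  by_cases hac : a = c
  · subst hac
    by_cases hbd : b = d
    · subst hbd; rfl
    · obtain ⟨n, hn'⟩ := exists_adj hG hn a
      refine ⟨SimpleGraph.Walk.cons (Or.inl hn' : (lexProd G H).Adj (a, b) (n, b)) ?_⟩
      exact SimpleGraph.Walk.cons (Or.inl hn'.symm : (lexProd G H).Adj (n, b) (a, d))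
        SimpleGraph.Walk.nil
  · obtain ⟨q, _⟩ := lex_exists_walk (H := H) hG hac b d
    exact ⟨q⟩

lemma lex_dist_pos (hG : G.Connected) [Fintype V] (hn : 2 ≤ Fintype.card V) {x z : V × W}
    (hne : x ≠ z) : 0 < (lexProd G H).dist x z :=
  (lex_reachable hG hn x z).pos_dist_of_ne hne

lemma lex_dist_col_le_two (hG : G.Connected) [Fintype V] (hn : 2 ≤ Fintype.card V)
    (a : V) (b d : W) : (lexProd G H).dist (a, b) (a, d) ≤ 2 := by
  obtain ⟨n, hn'⟩ := exists_adj hG hn a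
  have e1 : (lexProd G H).Adj (a, b) (n, b) := Or.inl hn'
  have e2 : (lexProd G H).Adj (n, b) (a, d) := Or.inl hn'.symm
  have := dist_le (SimpleGraph.Walk.cons e1 (SimpleGraph.Walk.cons e2 SimpleGraph.Walk.nil))
  simpa using this

end Lex

section SsetMem

variable {α : Type*} {Γ : SimpleGraph α} {x y z : α}

lemma left_mem_Sset (h : Γ.Reachable y x) : x ∈ Sset Γ x y := by
  obtain ⟨p, hp⟩ := h.exists_walk_length_eq_dist
  exact Or.inl ⟨p, hp, p.end_mem_support⟩

lemma right_mem_Sset (h : Γ.Reachable x y) : y ∈ Sset Γ x y := by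
  obtain ⟨p, hp⟩ := h.exists_walk_length_eq_dist
  exact Or.inr ⟨p, hp, p.end_mem_support⟩

/-- If `y–x–z` is a path of length two with `y,z` nonadjacent, then `z ∈ S{x,y}`. -/
lemma mem_Sset_of_two (hyz : y ≠ z) (hnadj : ¬ Γ.Adj y z) (e1 : Γ.Adj y x) (e2 : Γ.Adj x z) :
    z ∈ Sset Γ x y := by
  have p : Γ.Walk y z := SimpleGraph.Walk.cons e1 (SimpleGraph.Walk.cons e2 SimpleGraph.Walk.nil)
  refine Or.inl ⟨SimpleGraph.Walk.cons e1 (SimpleGraph.Walk.cons e2 SimpleGraph.Walk.nil), ?_, ?_⟩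
  · have h2 : Γ.dist y z = 2 := by
      have h1 : Γ.dist y z ≤ 2 := by
        have := dist_le (SimpleGraph.Walk.cons e1 (SimpleGraph.Walk.cons e2 SimpleGraph.Walk.nil))
        simpa using this
      have h0 : Γ.dist y z ≠ 0 := by
        rw [dist_ne_zero_iff_ne_and_reachable]
        exact ⟨hyz, ⟨p⟩⟩
      have h2' : Γ.dist y z ≠ 1 := fun h => hnadj (dist_eq_one_iff_adj.mp h)
      omega
    simp [h2]
  · simp

/-- symmetric version: `y` on a shortest `x–z` path. -/
lemma mem_Sset_of_two' (hxz : x ≠ z) (hnadj : ¬ Γ.Adj x z) (e1 : Γ.Adj x y) (e2 : Γ.Adj y z) :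
    z ∈ Sset Γ x y := by
  have p : Γ.Walk x z := SimpleGraph.Walk.cons e1 (SimpleGraph.Walk.cons e2 SimpleGraph.Walk.nil)
  refine Or.inr ⟨SimpleGraph.Walk.cons e1 (SimpleGraph.Walk.cons e2 SimpleGraph.Walk.nil), ?_, ?_⟩
  · have h2 : Γ.dist x z = 2 := by
      have h1 : Γ.dist x z ≤ 2 := by
        have := dist_le (SimpleGraph.Walk.cons e1 (SimpleGraph.Walk.cons e2 SimpleGraph.Walk.nil))
        simpa using this
      have h0 : Γ.dist x z ≠ 0 := by
        rw [dist_ne_zero_iff_ne_and_reachable]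
        exact ⟨hxz, ⟨p⟩⟩
      have h2' : Γ.dist x z ≠ 1 := fun h => hnadj (dist_eq_one_iff_adj.mp h)
      omega
    simp [h2]
  · simp

end SsetMem

section Twins

variable {V : Type*} {G : SimpleGraph V} {u v : V}

lemma twin_dist_le (hG : G.Connected)
    (hsub : ∀ n, G.Adj v n → n = u ∨ G.Adj u n) {c : V} (hcv : c ≠ v) :
    G.dist u c ≤ G.dist v c := by
  by_cases hcu : c = u
  · subst hcu
    simp only [dist_self]
    exact Nat.zero_le _
  · obtain ⟨p, hp⟩ := hG.exists_walk_length_eq_dist v c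
    cases p with
    | nil => exact absurd rfl (Ne.symm hcv)
    | @cons _ n _ e q =>
      simp only [Walk.length_cons] at hp
      rcases hsub n e with rfl | hadj
      · have := dist_le q
        omega
      · have := dist_le (SimpleGraph.Walk.cons hadj q)
        simp only [Walk.length_cons] at this
        omega

lemma trueTwin_adj (htw : insert v (G.neighborSet v) = insert u (G.neighborSet u))
    (hne : v ≠ u) : G.Adj u v := by
  have : v ∈ insert u (G.neighborSet u) := htw ▸ Set.mem_insert v _
  rcases this with h | h
  · exact absurd h hne
  · exact h

lemma trueTwin_dist_eq (hG : G.Connected)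
    (htw : insert v (G.neighborSet v) = insert u (G.neighborSet u)) (hne : v ≠ u)
    {c : V} (hcu : c ≠ u) (hcv : c ≠ v) : G.dist u c = G.dist v c := by
  have h1 : ∀ n, G.Adj v n → n = u ∨ G.Adj u n := by
    intro n hn
    have : n ∈ insert u (G.neighborSet u) := htw ▸ Set.mem_insert_of_mem _ hn
    rcases this with h | h
    · exact Or.inl h
    · exact Or.inr h
  have h2 : ∀ n, G.Adj u n → n = v ∨ G.Adj v n := by
    intro n hn
    have : n ∈ insert v (G.neighborSet v) := htw.symm ▸ Set.mem_insert_of_mem _ hn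
    rcases this with h | h
    · exact Or.inl h
    · exact Or.inr h
  exact le_antisymm (twin_dist_le hG h1 hcv) (twin_dist_le hG h2 hcu)

lemma falseTwin_not_adj (htw : G.neighborSet v = G.neighborSet u) : ¬ G.Adj u v := by
  intro h
  have : v ∈ G.neighborSet v := htw ▸ (h : v ∈ G.neighborSet u)
  exact G.loopless.irrefl v this

lemma falseTwin_dist_eq (hG : G.Connected)
    (htw : G.neighborSet v = G.neighborSet u) {c : V} (hcu : c ≠ u) (hcv : c ≠ v) :
    G.dist u c = G.dist v c := by
  have h1 : ∀ n, G.Adj v n → n = u ∨ G.Adj u n := fun n hn => by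
    have : n ∈ G.neighborSet u := htw ▸ (hn : n ∈ G.neighborSet v)
    exact Or.inr this
  have h2 : ∀ n, G.Adj u n → n = v ∨ G.Adj v n := fun n hn => by
    have : n ∈ G.neighborSet v := htw.symm ▸ (hn : n ∈ G.neighborSet u)
    exact Or.inr this
  exact le_antisymm (twin_dist_le hG h1 hcv) (twin_dist_le hG h2 hcu)

lemma falseTwin_dist_two (hG : G.Connected) [Fintype V] (hn : 2 ≤ Fintype.card V)
    (htw : G.neighborSet v = G.neighborSet u) (hne : v ≠ u) : G.dist u v = 2 := by
  have hex : ∃ n, G.Adj u n := by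
    obtain ⟨w, hw⟩ := Fintype.exists_ne_of_one_lt_card (by omega) u
    obtain ⟨p⟩ := hG.preconnected u w
    cases p with
    | nil => exact absurd rfl hw.symm
    | cons h q => exact ⟨_, h⟩
  obtain ⟨n, hadj⟩ := hex
  have hvn : G.Adj v n := by
    have : n ∈ G.neighborSet u := hadj
    rw [← htw] at this
    exact this
  have hnadj : ¬ G.Adj u v := falseTwin_not_adj htw
  have h1 : G.dist u v ≤ 2 := by
    have := dist_le (SimpleGraph.Walk.cons hadj (SimpleGraph.Walk.cons hvn.symm
      SimpleGraph.Walk.nil))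
    simpa using this
  have h0 : G.dist u v ≠ 0 := by
    rw [dist_ne_zero_iff_ne_and_reachable]
    exact ⟨hne.symm, hG.preconnected u v⟩
  have h2 : G.dist u v ≠ 1 := fun h => hnadj (dist_eq_one_iff_adj.mp h)
  omega

lemma not_trueTwin_and_falseTwin {G : SimpleGraph V} {u : V}
    (h1 : ∃ v : V, v ≠ u ∧ insert v (G.neighborSet v) = insert u (G.neighborSet u))
    (h2 : ∃ v : V, v ≠ u ∧ G.neighborSet v = G.neighborSet u) : False := by
  obtain ⟨v, hv, hvN⟩ := h1
  obtain ⟨w, hw, hwN⟩ := h2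
  have huv : G.Adj u v := trueTwin_adj hvN hv
  have hwv : G.Adj w v := by
    have : v ∈ G.neighborSet w := hwN ▸ (huv : v ∈ G.neighborSet u)
    exact this
  have : w ∈ insert u (G.neighborSet u) := hvN ▸ (Set.mem_insert_of_mem _ (hwv.symm : G.Adj v w))
  rcases this with h | h
  · exact hw h
  · have : w ∈ G.neighborSet w := hwN ▸ (h : w ∈ G.neighborSet u)
    exact G.loopless.irrefl w this

end Twins

section Directional

variable {V W : Type*} {G : SimpleGraph V} {H : SimpleGraph W} [Fintype V]

/-- In-column directional lemma: a shortest walk from `(u,b')` that passes through `(u,b)`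
stays in column `u`, and its endpoint is constrained. -/
lemma Sdir_col (hG : G.Connected) (hn : 2 ≤ Fintype.card V) {u : V} {b b' : W}
    (hbb' : b ≠ b') {z : V × W}
    (hz : ∃ p : (lexProd G H).Walk (u, b') z,
      p.length = (lexProd G H).dist (u, b') z ∧ (u, b) ∈ p.support) :
    z.1 = u ∧ (z.2 = b ∨ (H.Adj b' b ∧ H.Adj b z.2 ∧ ¬ H.Adj b' z.2 ∧ z.2 ≠ b')) := by
  classical
  obtain ⟨c, d⟩ := z
  obtain ⟨p, hlen, hmem⟩ := hz
  have hcu : c = u := by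
    by_contra hcu
    have huc : u ≠ c := fun h => hcu h.symm
    have hd1 : (lexProd G H).dist (u, b') (c, d) = G.dist u c := lex_dist_eq hG huc b' d
    have hd2 : (lexProd G H).dist (u, b) (c, d) = G.dist u c := lex_dist_eq hG huc b d
    have hcut := cut_lemma p hmem
    have h3 : 0 < (lexProd G H).dist (u, b') (u, b) :=
      lex_dist_pos hG hn (by simp [Ne.symm hbb'])
    omega
  obtain rfl := hcu.symm
  refine ⟨rfl, ?_⟩
  have hdle : (lexProd G H).dist (u, b') (u, d) ≤ 2 := lex_dist_col_le_two hG hn u b' d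
  have hple : p.length ≤ 2 := hlen ▸ hdle
  interval_cases hp : p.length
  · obtain ⟨hsup, hxz⟩ := walk_len0 p hp
    rw [hsup] at hmem
    simp only [List.mem_singleton, Prod.mk.injEq] at hmem
    exact absurd hmem.2 hbb'
  · obtain ⟨hsup, _⟩ := walk_len1 p hp
    rw [hsup] at hmem
    simp only [List.mem_cons, List.mem_singleton, Prod.mk.injEq, List.not_mem_nil,
      or_false] at hmem
    rcases hmem with ⟨_, h⟩ | ⟨_, h⟩
    · exact absurd h hbb'
    · exact Or.inl h.symm
  · obtain ⟨m, hsup, e1, e2⟩ := walk_len2 p hp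
    have hdist2 : (lexProd G H).dist (u, b') (u, d) = 2 := by omega
    rw [hsup] at hmem
    simp only [List.mem_cons, List.mem_singleton, List.not_mem_nil, or_false] at hmem
    rcases hmem with h | h | h
    · rw [Prod.mk.injEq] at h
      exact absurd h.2 hbb'
    · subst h
      rcases e1 with h1 | ⟨_, h1⟩
      · exact absurd h1 (G.loopless.irrefl u)
      rcases e2 with h2 | ⟨_, h2⟩
      · exact absurd h2 (G.loopless.irrefl u)
      have hnadj : ¬ H.Adj b' d := by
        intro hb'd
        exact not_adj_of_dist_eq_two hdist2 (Or.inr ⟨rfl, hb'd⟩)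
      have hne' : d ≠ b' := by
        intro h
        exact ne_of_dist_eq_two hdist2 (by rw [h])
      exact Or.inr ⟨h1, h2, hnadj, hne'⟩
    · rw [Prod.mk.injEq] at h
      exact Or.inl h.2.symm

/-- Cross-column directional lemma for adjacent true twins `u ~ v`. -/
lemma Sdir_cross (hG : G.Connected) (hn : 2 ≤ Fintype.card V) {u v : V}
    (hne : v ≠ u) (hadj : G.Adj u v)
    (hdist : ∀ c, c ≠ u → c ≠ v → G.dist u c = G.dist v c) {b b' : W} {z : V × W}
    (hz : ∃ p : (lexProd G H).Walk (v, b') z,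
      p.length = (lexProd G H).dist (v, b') z ∧ (u, b) ∈ p.support) :
    (z.1 = u ∧ z.2 = b) ∨ (z.1 = v ∧ (z.2 = b' ∨ ¬ H.Adj b' z.2)) := by
  classical
  obtain ⟨c, d⟩ := z
  obtain ⟨p, hlen, hmem⟩ := hz
  by_cases hcu : c = u
  · obtain rfl := hcu.symm
    have hd1 : (lexProd G H).dist (v, b') (u, d) = G.dist v u := lex_dist_eq hG hne b' d
    have hd2 : G.dist v u = 1 := dist_eq_one_iff_adj.mpr hadj.symm
    obtain ⟨hsup, _⟩ := walk_len1 p (by omega)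
    rw [hsup] at hmem
    simp only [List.mem_cons, List.mem_singleton, Prod.mk.injEq, List.not_mem_nil,
      or_false] at hmem
    rcases hmem with ⟨h, _⟩ | ⟨_, h⟩
    · exact absurd h.symm hne
    · exact Or.inl ⟨rfl, h.symm⟩
  by_cases hcv : c = v
  · obtain rfl := hcv.symm
    have hdle : (lexProd G H).dist (v, b') (v, d) ≤ 2 := lex_dist_col_le_two hG hn v b' d
    have hple : p.length ≤ 2 := hlen ▸ hdle
    interval_cases hp : p.length
    · obtain ⟨hsup, _⟩ := walk_len0 p hp
      rw [hsup] at hmem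
      simp only [List.mem_singleton, Prod.mk.injEq] at hmem
      exact absurd hmem.1.symm hne
    · obtain ⟨hsup, _⟩ := walk_len1 p hp
      rw [hsup] at hmem
      simp only [List.mem_cons, List.mem_singleton, Prod.mk.injEq, List.not_mem_nil,
        or_false] at hmem
      rcases hmem with ⟨h, _⟩ | ⟨h, _⟩ <;> exact absurd h.symm hne
    · obtain ⟨m, hsup, e1, e2⟩ := walk_len2 p hp
      have hdist2 : (lexProd G H).dist (v, b') (v, d) = 2 := by omega
      rw [hsup] at hmem
      simp only [List.mem_cons, List.mem_singleton, List.not_mem_nil, or_false] at hmem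
      rcases hmem with h | h | h
      · rw [Prod.mk.injEq] at h
        exact absurd h.1.symm hne
      · subst h
        have hnadj : ¬ H.Adj b' d := by
          intro hb'd
          exact not_adj_of_dist_eq_two hdist2 (Or.inr ⟨rfl, hb'd⟩)
        exact Or.inr ⟨rfl, Or.inr hnadj⟩
      · rw [Prod.mk.injEq] at h
        exact absurd h.1.symm hne
  · exfalso
    have hvc : v ≠ c := fun h => hcv h.symm
    have huc : u ≠ c := fun h => hcu h.symm
    have hd1 : (lexProd G H).dist (v, b') (c, d) = G.dist v c := lex_dist_eq hG hvc b' d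
    have hd2 : (lexProd G H).dist (u, b) (c, d) = G.dist u c := lex_dist_eq hG huc b d
    have hd3 : (lexProd G H).dist (v, b') (u, b) = G.dist v u := lex_dist_eq hG hne b' b
    have hd4 : G.dist u c = G.dist v c := hdist c hcu hcv
    have hd5 : 0 < G.dist v u := hG.pos_dist_of_ne hne
    have hcut := cut_lemma p hmem
    omega

/-- Directional lemma for nonadjacent false twins `u, v` at distance two. -/
lemma Sdir_false (hG : G.Connected) (hn : 2 ≤ Fintype.card V) {u v : V}
    (hne : v ≠ u) (hnadj : ¬ G.Adj u v) (hd2 : G.dist u v = 2)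
    (hdist : ∀ c, c ≠ u → c ≠ v → G.dist u c = G.dist v c) {w : W} {z : V × W}
    (hz : ∃ p : (lexProd G H).Walk (v, w) z,
      p.length = (lexProd G H).dist (v, w) z ∧ (u, w) ∈ p.support) :
    z = (u, w) := by
  classical
  obtain ⟨c, d⟩ := z
  obtain ⟨p, hlen, hmem⟩ := hz
  by_cases hcu : c = u
  · obtain rfl := hcu.symm
    have hd1 : (lexProd G H).dist (v, w) (u, d) = G.dist v u := lex_dist_eq hG hne w d
    have hdvu : G.dist v u = 2 := by rw [dist_comm]; exact hd2
    obtain ⟨m, hsup, e1, e2⟩ := walk_len2 p (by omega)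
    rw [hsup] at hmem
    simp only [List.mem_cons, List.mem_singleton, List.not_mem_nil, or_false] at hmem
    rcases hmem with h | h | h
    · rw [Prod.mk.injEq] at h
      exact absurd h.1.symm hne
    · subst h
      rcases e1 with h1 | ⟨h1, _⟩
      · exact absurd h1.symm hnadj
      · exact absurd h1 hne
    · rw [Prod.mk.injEq] at h
      rw [h.2]
  by_cases hcv : c = v
  · exfalso
    obtain rfl := hcv.symm
    have hdle : (lexProd G H).dist (v, w) (v, d) ≤ 2 := lex_dist_col_le_two hG hn v w d
    have hd3 : (lexProd G H).dist (v, w) (u, w) = G.dist v u := lex_dist_eq hG hne w w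
    have hd4 : (lexProd G H).dist (u, w) (v, d) = G.dist u v := lex_dist_eq hG (Ne.symm hne) w d
    have hdvu : G.dist v u = 2 := by rw [dist_comm]; exact hd2
    have hcut := cut_lemma p hmem
    omega
  · exfalso
    have hvc : v ≠ c := fun h => hcv h.symm
    have huc : u ≠ c := fun h => hcu h.symm
    have hd1 : (lexProd G H).dist (v, w) (c, d) = G.dist v c := lex_dist_eq hG hvc w d
    have hd2' : (lexProd G H).dist (u, w) (c, d) = G.dist u c := lex_dist_eq hG huc w d
    have hd3 : (lexProd G H).dist (v, w) (u, w) = G.dist v u := lex_dist_eq hG hne w w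
    have hd4 : G.dist u c = G.dist v c := hdist c hcu hcv
    have hd5 : 0 < G.dist v u := hG.pos_dist_of_ne hne
    have hcut := cut_lemma p hmem
    omega

end Directional

section Membership

variable {V W : Type*} {G : SimpleGraph V} {H : SimpleGraph W} [Fintype V] [Fintype W]

lemma k2_connected : (⊤ : SimpleGraph (Fin 2)).Connected := SimpleGraph.connected_top

lemma k2_card : 2 ≤ Fintype.card (Fin 2) := by simp

lemma k2_reachable (x z : Fin 2 × W) :
    (lexProd (⊤ : SimpleGraph (Fin 2)) H).Reachable x z :=
  lex_reachable k2_connected k2_card x z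

lemma k2_not_adj_col {i : Fin 2} {b d : W} (h : ¬ H.Adj b d) :
    ¬ (lexProd (⊤ : SimpleGraph (Fin 2)) H).Adj (i, b) (i, d) := by
  rintro (hh | ⟨-, hh⟩)
  · exact (⊤ : SimpleGraph (Fin 2)).loopless.irrefl i hh
  · exact h hh

lemma memK2_col {i : Fin 2} {b b' d : W}
    (hcond : d = b ∨ d = b' ∨ (H.Adj b' b ∧ H.Adj b d ∧ ¬ H.Adj b' d ∧ d ≠ b')
      ∨ (H.Adj b b' ∧ H.Adj b' d ∧ ¬ H.Adj b d ∧ d ≠ b)) :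
    (i, d) ∈ Sset (lexProd (⊤ : SimpleGraph (Fin 2)) H) (i, b) (i, b') := by
  rcases hcond with rfl | rfl | ⟨h1, h2, h3, h4⟩ | ⟨h1, h2, h3, h4⟩
  · exact left_mem_Sset (k2_reachable _ _)
  · exact right_mem_Sset (k2_reachable _ _)
  · exact mem_Sset_of_two (by simp [Ne.symm h4]) (k2_not_adj_col h3)
      (Or.inr ⟨rfl, h1⟩) (Or.inr ⟨rfl, h2⟩)
  · exact mem_Sset_of_two' (by simp [Ne.symm h4]) (k2_not_adj_col h3)
      (Or.inr ⟨rfl, h1⟩) (Or.inr ⟨rfl, h2⟩)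

lemma memK2_cross_left {i j : Fin 2} (hij : i ≠ j) {b b' d : W}
    (hcond : d = b ∨ ¬ H.Adj b d) :
    (i, d) ∈ Sset (lexProd (⊤ : SimpleGraph (Fin 2)) H) (i, b) (j, b') := by
  by_cases hdb : d = b
  · subst hdb; exact left_mem_Sset (k2_reachable _ _)
  rcases hcond with rfl | hnadj
  · exact absurd rfl hdb
  · exact mem_Sset_of_two' (by simp [Ne.symm hdb]) (k2_not_adj_col hnadj)
      (Or.inl hij) (Or.inl hij.symm)

lemma memK2_cross_right {i j : Fin 2} (hij : i ≠ j) {b b' d : W}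
    (hcond : d = b' ∨ ¬ H.Adj b' d) :
    (j, d) ∈ Sset (lexProd (⊤ : SimpleGraph (Fin 2)) H) (i, b) (j, b') := by
  by_cases hdb : d = b'
  · subst hdb; exact right_mem_Sset (k2_reachable _ _)
  rcases hcond with rfl | hnadj
  · exact absurd rfl hdb
  · exact mem_Sset_of_two (by simp [Ne.symm hdb]) (k2_not_adj_col hnadj)
      (Or.inl hij.symm) (Or.inl hij)

lemma mem_SL (hr : ∀ w w' : W, H.Reachable w w') {b b' d : W}
    (hcond : d = b ∨ d = b' ∨ (H.Adj b' b ∧ H.Adj b d ∧ ¬ H.Adj b' d ∧ d ≠ b')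
      ∨ (H.Adj b b' ∧ H.Adj b' d ∧ ¬ H.Adj b d ∧ d ≠ b)) :
    d ∈ SLset H b b' := by
  rcases hcond with hd | hd | ⟨h1, h2, h3, h4⟩ | ⟨h1, h2, h3, h4⟩
  · rw [hd]; exact ⟨Or.inl (Set.mem_insert _ _), left_mem_Sset (hr _ _)⟩
  · rw [hd]; exact ⟨Or.inr (Set.mem_insert _ _), right_mem_Sset (hr _ _)⟩
  · exact ⟨Or.inl (Set.mem_insert_of_mem _ h2), mem_Sset_of_two (Ne.symm h4) h3 h1 h2⟩
  · exact ⟨Or.inr (Set.mem_insert_of_mem _ h2), mem_Sset_of_two' (Ne.symm h4) h3 h1 h2⟩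

/-- Full in-column characterization derived from the directional lemma. -/
lemma Sset_col_subset (hG : G.Connected) (hn : 2 ≤ Fintype.card V) {u : V} {b b' : W}
    (hbb' : b ≠ b') {z : V × W} (hz : z ∈ Sset (lexProd G H) (u, b) (u, b')) :
    z.1 = u ∧ (z.2 = b ∨ z.2 = b'
      ∨ (H.Adj b' b ∧ H.Adj b z.2 ∧ ¬ H.Adj b' z.2 ∧ z.2 ≠ b')
      ∨ (H.Adj b b' ∧ H.Adj b' z.2 ∧ ¬ H.Adj b z.2 ∧ z.2 ≠ b)) := by
  rcases hz with h | h
  · have := Sdir_col hG hn hbb' h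
    tauto
  · have := Sdir_col hG hn (Ne.symm hbb') h
    tauto

lemma Sset_cross_subset (hG : G.Connected) (hn : 2 ≤ Fintype.card V) {u v : V}
    (hne : v ≠ u) (hadj : G.Adj u v)
    (hdist : ∀ c, c ≠ u → c ≠ v → G.dist u c = G.dist v c) {b b' : W} {z : V × W}
    (hz : z ∈ Sset (lexProd G H) (u, b) (v, b')) :
    (z.1 = u ∧ (z.2 = b ∨ ¬ H.Adj b z.2)) ∨ (z.1 = v ∧ (z.2 = b' ∨ ¬ H.Adj b' z.2)) := by
  have hdist' : ∀ c, c ≠ v → c ≠ u → G.dist v c = G.dist u c := fun c h1 h2 =>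
    (hdist c h2 h1).symm
  rcases hz with h | h
  · have := Sdir_cross hG hn hne hadj hdist h
    tauto
  · have := Sdir_cross hG hn (Ne.symm hne) hadj.symm hdist' h
    tauto

lemma Sset_false_subset (hG : G.Connected) (hn : 2 ≤ Fintype.card V) {u v : V}
    (hne : v ≠ u) (hnadj : ¬ G.Adj u v) (hd2 : G.dist u v = 2)
    (hdist : ∀ c, c ≠ u → c ≠ v → G.dist u c = G.dist v c) {w : W} {z : V × W}
    (hz : z ∈ Sset (lexProd G H) (u, w) (v, w)) :
    z = (u, w) ∨ z = (v, w) := by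
  have hdist' : ∀ c, c ≠ v → c ≠ u → G.dist v c = G.dist u c := fun c h1 h2 =>
    (hdist c h2 h1).symm
  have hd2' : G.dist v u = 2 := by rw [dist_comm]; exact hd2
  rcases hz with h | h
  · exact Or.inl (Sdir_false hG hn hne hnadj hd2 hdist h)
  · exact Or.inr (Sdir_false hG hn (Ne.symm hne) (fun hh => hnadj hh.symm) hd2' hdist' h)

end Membership

section SumTransfer

lemma finsum_mem_eq_sum_toFinset {α : Type*} [Fintype α] (S : Set α) (g : α → ℝ) :
    ∑ᶠ z ∈ S, g z = ∑ z ∈ (Set.toFinite S).toFinset, g z := by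
  rw [← finsum_mem_coe_finset, Set.Finite.coe_toFinset]

lemma sum_transfer {α β : Type*} [Fintype α] [Fintype β] (S : Set α) (T : Set β)
    (ψ : α → β) (g : α → ℝ) (h : β → ℝ)
    (hinj : Set.InjOn ψ S) (hmapT : ∀ z ∈ S, ψ z ∈ T) (hval : ∀ z ∈ S, h (ψ z) = g z)
    (hpos : ∀ b, 0 ≤ h b) : ∑ᶠ z ∈ S, g z ≤ ∑ᶠ b ∈ T, h b := by
  classical
  rw [finsum_mem_eq_sum_toFinset S g, finsum_mem_eq_sum_toFinset T h]
  calc ∑ z ∈ (Set.toFinite S).toFinset, g z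
      = ∑ z ∈ (Set.toFinite S).toFinset, h (ψ z) := by
        refine Finset.sum_congr rfl fun z hz => ?_
        exact (hval z ((Set.Finite.mem_toFinset _).mp hz)).symm
    _ = ∑ b ∈ (Set.toFinite S).toFinset.image ψ, h b := by
        refine (Finset.sum_image ?_).symm
        intro x hx y hy hxy
        exact hinj ((Set.Finite.mem_toFinset _).mp hx) ((Set.Finite.mem_toFinset _).mp hy) hxy
    _ ≤ ∑ b ∈ (Set.toFinite T).toFinset, h b := by
        refine Finset.sum_le_sum_of_subset_of_nonneg ?_ fun b _ _ => hpos b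
        intro b hb
        obtain ⟨z, hz, rfl⟩ := Finset.mem_image.mp hb
        exact (Set.Finite.mem_toFinset _).mpr (hmapT z ((Set.Finite.mem_toFinset _).mp hz))

end SumTransfer

section ColumnBounds

variable {V W : Type*} [Fintype V] [Fintype W] {G : SimpleGraph V} {H : SimpleGraph W}
  {g : V × W → ℝ}

lemma slf_set_bddBelow : BddBelow {s : ℝ | ∃ f : W → ℝ, IsSLF H f ∧ s = ∑ᶠ v, f v} := by
  refine ⟨0, fun s hs => ?_⟩
  obtain ⟨f, hf, rfl⟩ := hs
  exact finsum_nonneg fun v => (hf.1 v).1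

lemma sdimf_set_bddBelow {α : Type*} (Γ : SimpleGraph α) :
    BddBelow {s : ℝ | ∃ f : α → ℝ, IsSRF Γ f ∧ s = ∑ᶠ v, f v} := by
  refine ⟨0, fun s hs => ?_⟩
  obtain ⟨f, hf, rfl⟩ := hs
  exact finsum_nonneg fun v => (hf.1 v).1

lemma slf_le_col (hG : G.Connected) (hn : 2 ≤ Fintype.card V)
    (hg : IsSRF (lexProd G H) g) (u : V) :
    slf H ≤ ∑ w : W, g (u, w) := by
  classical
  by_cases hr : ∀ w w' : W, H.Reachable w w'
  · have hf : IsSLF H (fun d => g (u, d)) := by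
      constructor
      · exact fun v => hg.1 (u, v)
      · intro x y hxy
        have hp := hg.2 (u, x) (u, y) (fun hE => hxy (congrArg Prod.snd hE))
        refine le_trans hp ?_
        refine sum_transfer _ _ (fun z => z.2) g (fun d => g (u, d)) ?_ ?_ ?_ (fun b => (hg.1 (u, b)).1)
        · intro z1 hz1 z2 hz2 he
          dsimp only at he
          have h1 := (Sset_col_subset hG hn hxy hz1).1
          have h2 := (Sset_col_subset hG hn hxy hz2).1
          exact Prod.ext (h1.trans h2.symm) he
        · intro z hz
          exact mem_SL hr (Sset_col_subset hG hn hxy hz).2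
        · intro z hz
          have h1 := (Sset_col_subset hG hn hxy hz).1
          show g (u, z.2) = g z
          rw [← h1]
    have hmem : (∑ᶠ d, g (u, d)) ∈ {s : ℝ | ∃ f' : W → ℝ, IsSLF H f' ∧ s = ∑ᶠ v, f' v} :=
      ⟨fun d => g (u, d), hf, rfl⟩
    have hle : slf H ≤ ∑ᶠ d, g (u, d) := csInf_le slf_set_bddBelow hmem
    rwa [finsum_eq_sum_of_fintype] at hle
  · push_neg at hr
    obtain ⟨w, w', hw⟩ := hr
    have hempty : {s : ℝ | ∃ f : W → ℝ, IsSLF H f ∧ s = ∑ᶠ v, f v} = ∅ := by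
      ext s
      simp only [Set.mem_setOf_eq, Set.mem_empty_iff_false, iff_false]
      rintro ⟨f, hf, rfl⟩
      have hne : w ≠ w' := by rintro rfl; exact hw (Reachable.refl w)
      have h1 := hf.2 w w' hne
      have hSempty : SLset H w w' = ∅ := by
        ext z
        simp only [Set.mem_empty_iff_false, iff_false]
        rintro ⟨-, hz⟩
        rcases hz with ⟨p, -, hmem⟩ | ⟨p, -, hmem⟩
        · exact hw (Reachable.symm ⟨p.takeUntil w hmem⟩)
        · exact hw ⟨p.takeUntil w' hmem⟩
      rw [hSempty, finsum_mem_empty] at h1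
      linarith
    have h0 : slf H = 0 := by unfold slf; rw [hempty]; exact Real.sInf_empty
    rw [h0]
    exact Finset.sum_nonneg fun w _ => (hg.1 (u, w)).1

lemma sdimfK2_le_cols (hG : G.Connected) (hn : 2 ≤ Fintype.card V)
    (hg : IsSRF (lexProd G H) g) {u v : V} (hne : v ≠ u)
    (htw : insert v (G.neighborSet v) = insert u (G.neighborSet u)) :
    sdimf (lexProd (⊤ : SimpleGraph (Fin 2)) H) ≤ ∑ w : W, g (u, w) + ∑ w : W, g (v, w) := by
  classical
  have hadj : G.Adj u v := trueTwin_adj htw hne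
  have hdist : ∀ c, c ≠ u → c ≠ v → G.dist u c = G.dist v c := fun c hcu hcv =>
    trueTwin_dist_eq hG htw hne hcu hcv
  set h2 : Fin 2 × W → ℝ := fun p => if p.1 = 0 then g (u, p.2) else g (v, p.2) with hh2
  have hval0 : ∀ d : W, h2 (0, d) = g (u, d) := fun d => by simp [hh2]
  have hval1 : ∀ d : W, h2 (1, d) = g (v, d) := fun d => by
    simp only [hh2]
    norm_num
  have hbnd : ∀ p, 0 ≤ h2 p ∧ h2 p ≤ 1 := by
    intro p
    by_cases hp : p.1 = 0 <;> simp only [hh2, hp, if_pos, if_neg, if_true, if_false] <;>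
      first
        | exact ⟨(hg.1 _).1, (hg.1 _).2⟩
        | (rw [if_neg hp]; exact ⟨(hg.1 _).1, (hg.1 _).2⟩)
  have hsrf : IsSRF (lexProd (⊤ : SimpleGraph (Fin 2)) H) h2 := by
    refine ⟨hbnd, ?_⟩
    rintro ⟨i, b⟩ ⟨j, b'⟩ hxy
    fin_cases i <;> fin_cases j
    · -- (0,b) (0,b')
      have hbb' : b ≠ b' := fun hE => hxy (by rw [hE])
      have hp := hg.2 (u, b) (u, b') (fun hE => hbb' (congrArg Prod.snd hE))
      refine le_trans hp ?_
      refine sum_transfer _ _ (fun z => ((0 : Fin 2), z.2)) g h2 ?_ ?_ ?_ (fun p => (hbnd p).1)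
      · intro z1 hz1 z2 hz2 he
        dsimp only at he
        have h1 := (Sset_col_subset hG hn hbb' hz1).1
        have h2' := (Sset_col_subset hG hn hbb' hz2).1
        have hsnd := congrArg Prod.snd he
        exact Prod.ext (h1.trans h2'.symm) hsnd
      · intro z hz
        dsimp only
        exact memK2_col (Sset_col_subset hG hn hbb' hz).2
      · intro z hz
        have h1 := (Sset_col_subset hG hn hbb' hz).1
        rw [hval0]
        rw [← h1]
    · -- (0,b) (1,b')
      have hp := hg.2 (u, b) (v, b') (fun hE => hne (congrArg Prod.fst hE).symm)
      refine le_trans hp ?_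
      refine sum_transfer _ _ (fun z => (if z.1 = u then (0 : Fin 2) else 1, z.2)) g h2
        ?_ ?_ ?_ (fun p => (hbnd p).1)
      · intro z1 hz1 z2 hz2 he
        dsimp only at he
        have h1 := Sset_cross_subset hG hn hne hadj hdist hz1
        have h2' := Sset_cross_subset hG hn hne hadj hdist hz2
        have hsnd := congrArg Prod.snd he
        have hfst := congrArg Prod.fst he
        dsimp only at hsnd hfst
        rcases h1 with ⟨ha, -⟩ | ⟨ha, -⟩ <;> rcases h2' with ⟨hb', -⟩ | ⟨hb', -⟩
        · exact Prod.ext (ha.trans hb'.symm) hsnd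
        · rw [if_pos ha, if_neg (hb' ▸ hne)] at hfst; exact absurd hfst (by decide)
        · rw [if_neg (ha ▸ hne), if_pos hb'] at hfst; exact absurd hfst (by decide)
        · exact Prod.ext (ha.trans hb'.symm) hsnd
      · intro z hz
        dsimp only
        rcases Sset_cross_subset hG hn hne hadj hdist hz with ⟨ha, hc⟩ | ⟨ha, hc⟩
        · rw [if_pos ha]
          exact memK2_cross_left (by decide) hc
        · rw [if_neg (ha ▸ hne)]
          exact memK2_cross_right (by decide) hc
      · intro z hz
        rcases Sset_cross_subset hG hn hne hadj hdist hz with ⟨ha, -⟩ | ⟨ha, -⟩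
        · rw [if_pos ha, hval0, ← ha]
        · rw [if_neg (ha ▸ hne), hval1, ← ha]
    · -- (1,b) (0,b')
      have hp := hg.2 (v, b) (u, b') (fun hE => hne (congrArg Prod.fst hE))
      refine le_trans hp ?_
      refine sum_transfer _ _ (fun z => (if z.1 = v then (1 : Fin 2) else 0, z.2)) g h2
        ?_ ?_ ?_ (fun p => (hbnd p).1)
      · intro z1 hz1 z2 hz2 he
        dsimp only at he
        have h1 := Sset_cross_subset hG hn (Ne.symm hne) hadj.symm
          (fun c h1 h2 => (hdist c h2 h1).symm) hz1
        have h2' := Sset_cross_subset hG hn (Ne.symm hne) hadj.symm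
          (fun c h1 h2 => (hdist c h2 h1).symm) hz2
        have hsnd := congrArg Prod.snd he
        have hfst := congrArg Prod.fst he
        dsimp only at hsnd hfst
        rcases h1 with ⟨ha, -⟩ | ⟨ha, -⟩ <;> rcases h2' with ⟨hb', -⟩ | ⟨hb', -⟩
        · exact Prod.ext (ha.trans hb'.symm) hsnd
        · rw [if_pos ha, if_neg (hb' ▸ Ne.symm hne)] at hfst; exact absurd hfst (by decide)
        · rw [if_neg (ha ▸ Ne.symm hne), if_pos hb'] at hfst; exact absurd hfst (by decide)
        · exact Prod.ext (ha.trans hb'.symm) hsnd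
      · intro z hz
        dsimp only
        rcases Sset_cross_subset hG hn (Ne.symm hne) hadj.symm
          (fun c h1 h2 => (hdist c h2 h1).symm) hz with ⟨ha, hc⟩ | ⟨ha, hc⟩
        · rw [if_pos ha]
          exact memK2_cross_left (by decide) hc
        · rw [if_neg (ha ▸ Ne.symm hne)]
          exact memK2_cross_right (by decide) hc
      · intro z hz
        rcases Sset_cross_subset hG hn (Ne.symm hne) hadj.symm
          (fun c h1 h2 => (hdist c h2 h1).symm) hz with ⟨ha, -⟩ | ⟨ha, -⟩
        · rw [if_pos ha, hval1, ← ha]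
        · rw [if_neg (ha ▸ Ne.symm hne), hval0, ← ha]
    · -- (1,b) (1,b')
      have hbb' : b ≠ b' := fun hE => hxy (by rw [hE])
      have hp := hg.2 (v, b) (v, b') (fun hE => hbb' (congrArg Prod.snd hE))
      refine le_trans hp ?_
      refine sum_transfer _ _ (fun z => ((1 : Fin 2), z.2)) g h2 ?_ ?_ ?_ (fun p => (hbnd p).1)
      · intro z1 hz1 z2 hz2 he
        dsimp only at he
        have h1 := (Sset_col_subset hG hn hbb' hz1).1
        have h2' := (Sset_col_subset hG hn hbb' hz2).1
        have hsnd := congrArg Prod.snd he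
        exact Prod.ext (h1.trans h2'.symm) hsnd
      · intro z hz
        dsimp only
        exact memK2_col (Sset_col_subset hG hn hbb' hz).2
      · intro z hz
        have h1 := (Sset_col_subset hG hn hbb' hz).1
        rw [hval1]
        rw [← h1]
  have hmem : (∑ᶠ p, h2 p) ∈
      {s : ℝ | ∃ f : Fin 2 × W → ℝ,
        IsSRF (lexProd (⊤ : SimpleGraph (Fin 2)) H) f ∧ s = ∑ᶠ v, f v} := ⟨h2, hsrf, rfl⟩
  have hle : sdimf (lexProd (⊤ : SimpleGraph (Fin 2)) H) ≤ ∑ᶠ p, h2 p :=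
    csInf_le (sdimf_set_bddBelow _) hmem
  rw [finsum_eq_sum_of_fintype, Fintype.sum_prod_type, Fin.sum_univ_two] at hle
  simp only [hval0, hval1] at hle
  exact hle

lemma cardW_le_cols (hG : G.Connected) (hn : 2 ≤ Fintype.card V)
    (hg : IsSRF (lexProd G H) g) {u v : V} (hne : v ≠ u)
    (htw : G.neighborSet v = G.neighborSet u) :
    (Fintype.card W : ℝ) ≤ ∑ w : W, g (u, w) + ∑ w : W, g (v, w) := by
  classical
  have hnadj : ¬ G.Adj u v := falseTwin_not_adj htw
  have hd2 : G.dist u v = 2 := falseTwin_dist_two hG hn htw hne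
  have hdist : ∀ c, c ≠ u → c ≠ v → G.dist u c = G.dist v c := fun c hcu hcv =>
    falseTwin_dist_eq hG htw hcu hcv
  have key : ∀ w : W, 1 ≤ g (u, w) + g (v, w) := by
    intro w
    have hp := hg.2 (u, w) (v, w) (fun hE => hne (congrArg Prod.fst hE).symm)
    have hstep : ∑ᶠ z ∈ Sset (lexProd G H) (u, w) (v, w), g z ≤
        ∑ᶠ z ∈ ({(u, w), (v, w)} : Set (V × W)), g z := by
      refine sum_transfer _ _ id g g (Function.injective_id.injOn) ?_ (fun z _ => rfl)
        (fun p => (hg.1 p).1)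
      intro z hz
      rcases Sset_false_subset hG hn hne hnadj hd2 hdist hz with rfl | rfl
      · exact Set.mem_insert _ _
      · exact Set.mem_insert_of_mem _ rfl
    have hpair : ∑ᶠ z ∈ ({(u, w), (v, w)} : Set (V × W)), g z = g (u, w) + g (v, w) :=
      finsum_mem_pair (fun hE => hne (congrArg Prod.fst hE).symm)
    linarith
  calc (Fintype.card W : ℝ) = ∑ _w : W, (1 : ℝ) := by simp
    _ ≤ ∑ w : W, (g (u, w) + g (v, w)) := Finset.sum_le_sum fun w _ => key w
    _ = ∑ w : W, g (u, w) + ∑ w : W, g (v, w) := Finset.sum_add_distrib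

end ColumnBounds

section HalfBound

lemma half_bound {α : Type*} [DecidableEq α] (T : Finset α) (c : α → ℝ) (s : ℝ)
    (R : α → α → Prop)
    (hmem : ∀ u ∈ T, ∃ v, v ∈ T ∧ R u v)
    (hpair : ∀ u v, R u v → s ≤ c u + c v)
    (hshare : ∀ u₁ u₂ v, u₁ ≠ u₂ → R u₁ v → R u₂ v → s ≤ c u₁ + c u₂) :
    (T.card : ℝ) * (s / 2) ≤ ∑ u ∈ T, c u := by
  classical
  set f : α → α := fun u => if h : ∃ v, v ∈ T ∧ R u v then h.choose else u with hf
  have hfP : ∀ u ∈ T, f u ∈ T ∧ R u (f u) := by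
    intro u hu
    have h := hmem u hu
    simp only [hf, dif_pos h]
    exact h.choose_spec
  set D := T.filter (fun u => c u < s / 2) with hD
  set E := T.filter (fun u => ¬ c u < s / 2) with hE
  have hDT : D ⊆ T := Finset.filter_subset _ _
  have hfD : ∀ u ∈ D, f u ∈ E := by
    intro u hu
    obtain ⟨huT, hus⟩ := Finset.mem_filter.mp hu
    obtain ⟨hfT, hR⟩ := hfP u huT
    have := hpair u (f u) hR
    refine Finset.mem_filter.mpr ⟨hfT, ?_⟩
    intro hlt
    linarith
  have hinj : ∀ u1 ∈ D, ∀ u2 ∈ D, f u1 = f u2 → u1 = u2 := by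
    intro u1 h1 u2 h2 he
    by_contra hne
    have hR1 := (hfP u1 (hDT h1)).2
    have hR2 := (hfP u2 (hDT h2)).2
    rw [he] at hR1
    have hs := hshare u1 u2 (f u2) hne hR1 hR2
    have hc1 := (Finset.mem_filter.mp h1).2
    have hc2 := (Finset.mem_filter.mp h2).2
    linarith
  have hsplit : ∑ u ∈ D, (c u - s / 2) + ∑ u ∈ E, (c u - s / 2) = ∑ u ∈ T, (c u - s / 2) :=
    Finset.sum_filter_add_sum_filter_not T _ _
  have h2 : ∑ u ∈ D.image f, (c u - s / 2) ≤ ∑ u ∈ E, (c u - s / 2) := by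
    refine Finset.sum_le_sum_of_subset_of_nonneg ?_ ?_
    · intro b hb
      obtain ⟨z, hz, rfl⟩ := Finset.mem_image.mp hb
      exact hfD z hz
    · intro b hb _
      have := (Finset.mem_filter.mp hb).2
      linarith [not_lt.mp this]
  have h3 : ∑ u ∈ D.image f, (c u - s / 2) = ∑ u ∈ D, (c (f u) - s / 2) :=
    Finset.sum_image hinj
  have h4 : 0 ≤ ∑ u ∈ D, ((c u - s / 2) + (c (f u) - s / 2)) := by
    refine Finset.sum_nonneg fun u hu => ?_
    have := hpair u (f u) (hfP u (hDT hu)).2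
    linarith
  rw [Finset.sum_add_distrib] at h4
  have key : 0 ≤ ∑ u ∈ T, (c u - s / 2) := by linarith
  have hconst : ∑ u ∈ T, (c u - s / 2) = ∑ u ∈ T, c u - T.card * (s / 2) := by
    rw [Finset.sum_sub_distrib, Finset.sum_const, nsmul_eq_mul]
  linarith

end HalfBound

/-- Let `G` be connected of order at least 2 and `H` a graph. Then
`sdim_f(G[H]) ≥ m₁(G)·sl_f(H) + (m₂(G)/2)·sdim_f(K₂[H]) + (m₃(G)/2)·|V(H)|`. -/
theorem sdimf_lexProd_twin_lower_bound {V W : Type*} [Fintype V] [Fintype W]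
    (G : SimpleGraph V) (H : SimpleGraph W)
    (hG : G.Connected) (hn : 2 ≤ Fintype.card V) :
    (m1 G : ℝ) * slf H
      + (m2 G : ℝ) / 2 * sdimf (lexProd (⊤ : SimpleGraph (Fin 2)) H)
      + (m3 G : ℝ) / 2 * (Fintype.card W : ℝ)
    ≤ sdimf (lexProd G H) := by
  classical
  rw [show sdimf (lexProd G H) =
    sInf {s : ℝ | ∃ g : V × W → ℝ, IsSRF (lexProd G H) g ∧ s = ∑ᶠ v, g v} from rfl]
  refine le_csInf ?_ ?_
  · -- the defining set is nonempty: the constant-one function is an SRF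
    refine ⟨∑ᶠ _v : V × W, (1 : ℝ), fun _ => 1, ⟨fun v => ⟨zero_le_one, le_refl 1⟩, ?_⟩, rfl⟩
    intro x y hxy
    have hxS : x ∈ Sset (lexProd G H) x y := left_mem_Sset (lex_reachable hG hn y x)
    have hstep : ∑ᶠ z ∈ ({x} : Set (V × W)), (1 : ℝ) ≤
        ∑ᶠ z ∈ Sset (lexProd G H) x y, (1 : ℝ) := by
      refine sum_transfer _ _ id _ _ (Function.injective_id.injOn) ?_ (fun z _ => rfl)
        (fun _ => zero_le_one)
      rintro z rfl
      exact hxS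
    rw [finsum_mem_singleton] at hstep
    simpa using hstep
  · rintro b ⟨g, hg, rfl⟩
    have htotal : ∑ᶠ z, g z = ∑ u : V, ∑ w : W, g (u, w) := by
      rw [finsum_eq_sum_of_fintype, Fintype.sum_prod_type]
    set col : V → ℝ := fun u => ∑ w : W, g (u, w) with hcol
    set Tset := Finset.univ.filter (fun u => HasTrueTwin G u) with hTset
    set Fset := Finset.univ.filter (fun u => HasFalseTwin G u) with hFset
    set Oset := Finset.univ.filter
      (fun u => ¬ HasTrueTwin G u ∧ ¬ HasFalseTwin G u) with hOset
    -- cardinalities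
    have hm1 : m1 G = Oset.card := by
      rw [m1, show {u : V | ¬ HasTrueTwin G u ∧ ¬ HasFalseTwin G u} = ↑Oset by
        ext u; simp [hOset]]
      exact Set.ncard_coe_finset _
    have hm2 : m2 G = Tset.card := by
      rw [m2, show {u : V | HasTrueTwin G u} = ↑Tset by ext u; simp [hTset]]
      exact Set.ncard_coe_finset _
    have hm3 : m3 G = Fset.card := by
      rw [m3, show {u : V | HasFalseTwin G u} = ↑Fset by ext u; simp [hFset]]
      exact Set.ncard_coe_finset _
    -- the O bound
    have hO : (Oset.card : ℝ) * slf H ≤ ∑ u ∈ Oset, col u := by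
      have := Finset.card_nsmul_le_sum Oset col (slf H)
        (fun u _ => slf_le_col hG hn hg u)
      rwa [nsmul_eq_mul] at this
    -- the T bound
    have hT : (Tset.card : ℝ) * (sdimf (lexProd (⊤ : SimpleGraph (Fin 2)) H) / 2)
        ≤ ∑ u ∈ Tset, col u := by
      refine half_bound Tset col _
        (fun u v => v ≠ u ∧ insert v (G.neighborSet v) = insert u (G.neighborSet u))
        ?_ ?_ ?_
      · intro u hu
        obtain ⟨v, hv, htw⟩ := (Finset.mem_filter.mp hu).2
        refine ⟨v, Finset.mem_filter.mpr ⟨Finset.mem_univ v, ⟨u, hv.symm, htw.symm⟩⟩, hv, htw⟩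
      · rintro u v ⟨hvu, htw⟩
        exact sdimfK2_le_cols hG hn hg hvu htw
      · rintro u1 u2 v hne ⟨h1, e1⟩ ⟨h2, e2⟩
        exact sdimfK2_le_cols hG hn hg (Ne.symm hne) (e2.symm.trans e1)
    -- the F bound
    have hF : (Fset.card : ℝ) * ((Fintype.card W : ℝ) / 2) ≤ ∑ u ∈ Fset, col u := by
      refine half_bound Fset col _
        (fun u v => v ≠ u ∧ G.neighborSet v = G.neighborSet u) ?_ ?_ ?_
      · intro u hu
        obtain ⟨v, hv, htw⟩ := (Finset.mem_filter.mp hu).2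
        refine ⟨v, Finset.mem_filter.mpr ⟨Finset.mem_univ v, ⟨u, hv.symm, htw.symm⟩⟩, hv, htw⟩
      · rintro u v ⟨hvu, htw⟩
        exact cardW_le_cols hG hn hg hvu htw
      · rintro u1 u2 v hne ⟨h1, e1⟩ ⟨h2, e2⟩
        exact cardW_le_cols hG hn hg (Ne.symm hne) (e2.symm.trans e1)
    -- the partition of the total sum
    have hdisj : ∀ u : V, HasTrueTwin G u → HasFalseTwin G u → False := fun u h1 h2 =>
      not_trueTwin_and_falseTwin h1 h2
    have hpart : ∑ u ∈ Tset, col u + ∑ u ∈ Fset, col u + ∑ u ∈ Oset, col u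
        = ∑ u : V, col u := by
      have e1 : ∑ u ∈ Tset, col u + ∑ u ∈ Finset.univ.filter (fun u => ¬ HasTrueTwin G u),
          col u = ∑ u : V, col u := Finset.sum_filter_add_sum_filter_not _ _ _
      have e2 : ∑ u ∈ (Finset.univ.filter (fun u => ¬ HasTrueTwin G u)).filter
            (fun u => HasFalseTwin G u), col u
          + ∑ u ∈ (Finset.univ.filter (fun u => ¬ HasTrueTwin G u)).filter
            (fun u => ¬ HasFalseTwin G u), col u
          = ∑ u ∈ Finset.univ.filter (fun u => ¬ HasTrueTwin G u), col u :=
        Finset.sum_filter_add_sum_filter_not _ _ _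
      have e3 : (Finset.univ.filter (fun u => ¬ HasTrueTwin G u)).filter
          (fun u => HasFalseTwin G u) = Fset := by
        ext u
        simp only [Finset.mem_filter, Finset.mem_univ, true_and, hFset]
        exact ⟨fun h => h.2, fun h => ⟨fun h' => hdisj u h' h, h⟩⟩
      have e4 : (Finset.univ.filter (fun u => ¬ HasTrueTwin G u)).filter
          (fun u => ¬ HasFalseTwin G u) = Oset := by
        ext u
        simp only [Finset.mem_filter, Finset.mem_univ, true_and, hOset]
      rw [e3, e4] at e2
      linarith
    have htot2 : ∑ᶠ z, g z = ∑ u : V, col u := htotal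
    rw [htot2, hm1, hm2, hm3]
    have hfinal : (Tset.card : ℝ) / 2 * sdimf (lexProd (⊤ : SimpleGraph (Fin 2)) H)
        = (Tset.card : ℝ) * (sdimf (lexProd (⊤ : SimpleGraph (Fin 2)) H) / 2) := by ring
    have hfinal2 : (Fset.card : ℝ) / 2 * (Fintype.card W : ℝ)
        = (Fset.card : ℝ) * ((Fintype.card W : ℝ) / 2) := by ring
    rw [hfinal, hfinal2]
    linarith
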